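/- The tail-integrated type-III kernel H₃ is continuously differentiable on (0, ∞) and in fact twice continuously differentiable; in particular H₃ and H₃' are continuous at the junction point x = (1−d)/κ. -/

import Mathlib

open MeasureTheory Real Set

/-- The tail-integrated type-III kernel. -/
noncomputable def H3 (κ d x : ℝ) : ℝ :=
  if x < (1 - d) / κ then x ^ d / Real.Gamma (d + 1)
  else ((1 - d) / κ) ^ d * (1 - d * Real.exp (1 - d - κ * x)) / ((1 - d) * Real.Gamma (d + 1))

/-- Gluing of two functions at a point. -/
noncomputable def piece (x₀ : ℝ) (f g : ℝ → ℝ) (x : ℝ) : ℝ :=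
  if x < x₀ then f x else g x

lemma piece_eventuallyEq_left {x₀ x : ℝ} {f g : ℝ → ℝ} (h : x < x₀) :
    piece x₀ f g =ᶠ[nhds x] f := by
  filter_upwards [Iio_mem_nhds h] with y hy
  simp only [piece]
  rw [if_pos (mem_Iio.mp hy)]

lemma piece_eventuallyEq_right {x₀ x : ℝ} {f g : ℝ → ℝ} (h : x₀ < x) :
    piece x₀ f g =ᶠ[nhds x] g := by
  filter_upwards [Ioi_mem_nhds h] with y hy
  simp only [piece]
  rw [if_neg (not_lt.mpr (le_of_lt (mem_Ioi.mp hy)))]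

lemma piece_eqOn_left {x₀ : ℝ} {f g : ℝ → ℝ} (hval : f x₀ = g x₀) :
    ∀ y ∈ Iic x₀, piece x₀ f g y = f y := by
  intro y hy
  rcases lt_or_eq_of_le (mem_Iic.mp hy) with h | h
  · simp [piece, h]
  · simp [piece, h, hval]

lemma piece_eqOn_right {x₀ : ℝ} {f g : ℝ → ℝ} :
    ∀ y ∈ Ici x₀, piece x₀ f g y = g y := by
  intro y hy
  simp [piece, not_lt.mpr (mem_Ici.mp hy)]

lemma piece_hasDerivAt_mid {x₀ c : ℝ} {f g : ℝ → ℝ} (hval : f x₀ = g x₀)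
    (hf : HasDerivAt f c x₀) (hg : HasDerivAt g c x₀) :
    HasDerivAt (piece x₀ f g) c x₀ := by
  have h1 : HasDerivWithinAt (piece x₀ f g) c (Iic x₀) x₀ :=
    hf.hasDerivWithinAt.congr (piece_eqOn_left hval)
      (piece_eqOn_left hval x₀ (mem_Iic.mpr le_rfl))
  have h2 : HasDerivWithinAt (piece x₀ f g) c (Ici x₀) x₀ :=
    hg.hasDerivWithinAt.congr piece_eqOn_right
      (piece_eqOn_right x₀ (mem_Ici.mpr le_rfl))
  have := h1.union h2
  rwa [Set.Iic_union_Ici, hasDerivWithinAt_univ] at this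

lemma piece_continuousAt_mid {x₀ : ℝ} {f g : ℝ → ℝ} (hval : f x₀ = g x₀)
    (hf : ContinuousAt f x₀) (hg : ContinuousAt g x₀) :
    ContinuousAt (piece x₀ f g) x₀ := by
  have h1 : ContinuousWithinAt (piece x₀ f g) (Iic x₀) x₀ :=
    hf.continuousWithinAt.congr (piece_eqOn_left hval)
      (piece_eqOn_left hval x₀ (mem_Iic.mpr le_rfl))
  have h2 : ContinuousWithinAt (piece x₀ f g) (Ici x₀) x₀ :=
    hg.continuousWithinAt.congr piece_eqOn_right
      (piece_eqOn_right x₀ (mem_Ici.mpr le_rfl))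
  have := h1.union h2
  rwa [Set.Iic_union_Ici, continuousWithinAt_univ] at this

/-- H₃ is twice continuously differentiable on (0,∞); in particular H₃ and H₃' are
continuous at the junction point x = (1−d)/κ. -/
theorem stmt4 (κ d : ℝ) (hκ : 0 < κ) (hd : d ∈ Set.Ioo (1/2 : ℝ) 1) :
    ContDiffOn ℝ 2 (H3 κ d) (Set.Ioi 0)
      ∧ ContinuousAt (H3 κ d) ((1 - d) / κ)
      ∧ ContinuousAt (deriv (H3 κ d)) ((1 - d) / κ) := by
  obtain ⟨hd2, hd1⟩ := hd
  have hd0 : 0 < d := by linarith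
  have h1d : 0 < 1 - d := by linarith
  set x₀ : ℝ := (1 - d) / κ with hx₀def
  have hx₀ : 0 < x₀ := div_pos h1d hκ
  have hκx₀ : κ * x₀ = 1 - d := by
    rw [hx₀def]; field_simp [hκ.ne']
  have hΓ : 0 < Real.Gamma (d + 1) := Real.Gamma_pos_of_pos (by linarith)
  set Γ : ℝ := Real.Gamma (d + 1) with hΓdef
  set A : ℝ := x₀ ^ d with hAdef
  set B : ℝ := (1 - d) * Γ with hBdef
  have hA : 0 < A := Real.rpow_pos_of_pos hx₀ d
  have hB : 0 < B := mul_pos h1d hΓ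
  -- the two branches and their first and second derivatives
  set f : ℝ → ℝ := fun x => x ^ d / Γ with hfdef
  set g : ℝ → ℝ := fun x => A * (1 - d * Real.exp (1 - d - κ * x)) / B with hgdef
  set f1 : ℝ → ℝ := fun x => d * x ^ (d - 1) / Γ with hf1def
  set g1 : ℝ → ℝ := fun x => A * -(d * (Real.exp (1 - d - κ * x) * -κ)) / B with hg1def
  set f2 : ℝ → ℝ := fun x => d * ((d - 1) * x ^ (d - 1 - 1)) / Γ with hf2def
  set g2 : ℝ → ℝ := fun x => A * -(d * (Real.exp (1 - d - κ * x) * -κ * -κ)) / B with hg2def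
  have hH : H3 κ d = piece x₀ f g := rfl
  have hexp0 : 1 - d - κ * x₀ = 0 := by rw [hκx₀]; ring
  -- junction value matchings
  have hval : f x₀ = g x₀ := by
    simp only [hfdef, hgdef, hexp0, Real.exp_zero, mul_one, hBdef, hAdef]
    field_simp
  have hsplit1 : x₀ ^ d = x₀ ^ (d - 1) * x₀ := by
    conv_lhs => rw [show d = d - 1 + 1 by ring]
    rw [Real.rpow_add hx₀, Real.rpow_one]
  have hsplit2 : x₀ ^ d = x₀ ^ (d - 1 - 1) * (x₀ * x₀) := by
    conv_lhs => rw [show d = d - 1 - 1 + 1 + 1 by ring]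
    rw [Real.rpow_add hx₀, Real.rpow_add hx₀, Real.rpow_one]
    ring
  have hval1 : f1 x₀ = g1 x₀ := by
    simp only [hf1def, hg1def, hexp0, Real.exp_zero, one_mul, hBdef, hAdef, hsplit1]
    field_simp
    linear_combination (-(d * x₀ ^ (d - 1) * Γ)) * hκx₀
      + (d * x₀ ^ (d - 1) * Γ + d - d ^ 2 * x₀ ^ (d - 1) * Γ - 1) * mul_inv_cancel₀ hκ.ne'
  have hval2 : f2 x₀ = g2 x₀ := by
    simp only [hf2def, hg2def, hexp0, Real.exp_zero, one_mul, hBdef, hAdef, hsplit2]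
    field_simp
    have hκ2 : κ ^ 2 * κ⁻¹ ^ 2 = 1 := by rw [← mul_pow, mul_inv_cancel₀ hκ.ne', one_pow]
    linear_combination (d * x₀ ^ (d - 1 - 1) * Γ * (κ * x₀ + (1 - d))) * hκx₀
      + (1 - 2 * d + d ^ 2 - d * x₀ ^ (d - 1 - 1) * Γ + 2 * d ^ 2 * x₀ ^ (d - 1 - 1) * Γ
        - d ^ 3 * x₀ ^ (d - 1 - 1) * Γ)
        * hκ2
  -- derivative of the inner exponent and the exponential factor
  have he : ∀ x : ℝ, HasDerivAt (fun y => Real.exp (1 - d - κ * y))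
      (Real.exp (1 - d - κ * x) * -κ) x := by
    intro x
    have hi : HasDerivAt (fun y : ℝ => 1 - d - κ * y) (-κ) x := by
      simpa using ((hasDerivAt_id x).const_mul κ).const_sub (1 - d)
    exact hi.exp
  -- derivatives of the branches
  have hfd : ∀ x : ℝ, 0 < x → HasDerivAt f (f1 x) x := by
    intro x hx
    exact (Real.hasDerivAt_rpow_const (Or.inl (ne_of_gt hx))).div_const Γ
  have hgd : ∀ x : ℝ, HasDerivAt g (g1 x) x := by
    intro x
    exact ((((he x).const_mul d).const_sub 1).const_mul A).div_const B
  have hf1d : ∀ x : ℝ, 0 < x → HasDerivAt f1 (f2 x) x := by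
    intro x hx
    exact ((Real.hasDerivAt_rpow_const (Or.inl (ne_of_gt hx))).const_mul d).div_const Γ
  have hg1d : ∀ x : ℝ, HasDerivAt g1 (g2 x) x := by
    intro x
    have : HasDerivAt (fun y => Real.exp (1 - d - κ * y) * -κ)
        (Real.exp (1 - d - κ * x) * -κ * -κ) x := (he x).mul_const (-κ)
    exact (((this.const_mul d).neg).const_mul A).div_const B
  -- global first derivative of H3 on (0,∞)
  set D1 : ℝ → ℝ := piece x₀ f1 g1 with hD1def
  set D2 : ℝ → ℝ := piece x₀ f2 g2 with hD2def
  have hH1 : ∀ x ∈ Ioi (0 : ℝ), HasDerivAt (H3 κ d) (D1 x) x := by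
    intro x hx
    rw [hH]
    rcases lt_trichotomy x x₀ with h | h | h
    · rw [hD1def, piece, if_pos h]
      exact (hfd x hx).congr_of_eventuallyEq (piece_eventuallyEq_left h)
    · rw [h] at hx ⊢
      rw [hD1def, piece, if_neg (lt_irrefl x₀)]
      refine piece_hasDerivAt_mid hval ?_ (hgd x₀)
      rw [← hval1]; exact hfd x₀ hx
    · rw [hD1def, piece, if_neg (not_lt.mpr (le_of_lt h))]
      exact (hgd x).congr_of_eventuallyEq (piece_eventuallyEq_right h)
  -- global second derivative on (0,∞)
  have hD1d : ∀ x ∈ Ioi (0 : ℝ), HasDerivAt D1 (D2 x) x := by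
    intro x hx
    rcases lt_trichotomy x x₀ with h | h | h
    · rw [hD2def, piece, if_pos h]
      exact (hf1d x hx).congr_of_eventuallyEq (piece_eventuallyEq_left h)
    · rw [h] at hx ⊢
      rw [hD2def, piece, if_neg (lt_irrefl x₀)]
      refine piece_hasDerivAt_mid hval1 ?_ (hg1d x₀)
      rw [← hval2]; exact hf1d x₀ hx
    · rw [hD2def, piece, if_neg (not_lt.mpr (le_of_lt h))]
      exact (hg1d x).congr_of_eventuallyEq (piece_eventuallyEq_right h)
  -- continuity of D2 on (0,∞)
  have hf2c : ∀ x : ℝ, 0 < x → ContinuousAt f2 x := by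
    intro x hx
    have hrc := Real.continuousAt_rpow_const x (d - 1 - 1) (Or.inl (ne_of_gt hx))
    exact (continuousAt_const.mul (continuousAt_const.mul hrc)).div_const Γ
  have hg2c : ∀ x : ℝ, ContinuousAt g2 x := by
    intro x
    have : Continuous g2 := by
      rw [hg2def]
      fun_prop
    exact this.continuousAt
  have hD2c : ContinuousOn D2 (Ioi 0) := by
    intro x hx
    apply ContinuousAt.continuousWithinAt
    rcases lt_trichotomy x x₀ with h | h | h
    · exact (hf2c x hx).congr (piece_eventuallyEq_left h).symm
    · rw [h] at hx ⊢
      exact piece_continuousAt_mid hval2 (hf2c x₀ hx) (hg2c x₀)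
    · exact (hg2c x).congr (piece_eventuallyEq_right h).symm
  -- deriv H3 agrees with D1 on (0,∞)
  have hderiv : ∀ x ∈ Ioi (0 : ℝ), deriv (H3 κ d) x = D1 x :=
    fun x hx => (hH1 x hx).deriv
  have hx₀mem : x₀ ∈ Ioi (0 : ℝ) := hx₀
  -- continuity claims
  have hcontH : ContinuousAt (H3 κ d) x₀ := (hH1 x₀ hx₀mem).continuousAt
  have hcontD1 : ContinuousAt D1 x₀ := (hD1d x₀ hx₀mem).continuousAt
  have hev : D1 =ᶠ[nhds x₀] deriv (H3 κ d) := by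
    filter_upwards [Ioi_mem_nhds hx₀] with y hy
    exact (hderiv y hy).symm
  have hcontderiv : ContinuousAt (deriv (H3 κ d)) x₀ := hcontD1.congr hev
  -- assemble ContDiffOn
  have hCD1 : ContDiffOn ℝ 1 D1 (Ioi 0) := by
    rw [show (1 : WithTop ℕ∞) = 0 + 1 from rfl,
      contDiffOn_succ_iff_deriv_of_isOpen isOpen_Ioi]
    refine ⟨fun x hx => (hD1d x hx).differentiableAt.differentiableWithinAt,
      fun h => by simp at h, ?_⟩
    rw [contDiffOn_zero]
    exact hD2c.congr fun x hx => (hD1d x hx).deriv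
  have hCD : ContDiffOn ℝ 2 (H3 κ d) (Ioi 0) := by
    rw [show (2 : WithTop ℕ∞) = 1 + 1 from rfl,
      contDiffOn_succ_iff_deriv_of_isOpen isOpen_Ioi]
    refine ⟨fun x hx => (hH1 x hx).differentiableAt.differentiableWithinAt,
      fun h => by simp at h, ?_⟩
    exact hCD1.congr hderiv
  exact ⟨hCD, hcontH, hcontderiv⟩
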